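/- First Step Analysis: let a be the least index with u(a) > 0 (so u(k) = 0 for all k < a and u(a) > 0). If (a + 1 − u(a))/u(a) < μ, equivalently a + 1 − u(a) < u(a)·μ, then S(a) < 0 (and thus u admits beneficial restart). -/
import Mathlib


theorem first_step_analysis
    (u : ℕ → ℝ) (hu0 : ∀ n, 0 ≤ u n) (hu1 : ∑' n, u n = 1)
    (hmean : Summable (fun n : ℕ => (n : ℝ) * u n))
    (μ : ℝ) (hμ : μ = ∑' n : ℕ, (n : ℝ) * u n)
    (U S : ℕ → ℝ)
    (hU : ∀ n, U n = ∑ k ∈ Finset.range (n + 1), u k)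
    (hS : ∀ n, S n = ∑ k ∈ Finset.range (n + 1), (1 - U k - u k * μ))
    (a : ℕ) (ha : 0 < u a) (ha' : ∀ k, k < a → u k = 0)
    (hFSA : (a : ℝ) + 1 - u a < u a * μ) :
    S a < 0 := by
  have hUk : ∀ k, k ≤ a → U k = if k = a then u a else 0 := by
    intro k hk
    rw [hU]
    rcases eq_or_lt_of_le hk with rfl | hlt
    · rw [if_pos rfl, Finset.sum_range_succ,
        Finset.sum_eq_zero (fun j hj => ha' j (Finset.mem_range.mp hj)), zero_add]
    · rw [if_neg (Nat.ne_of_lt hlt)]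
      exact Finset.sum_eq_zero fun j hj => ha' j (lt_of_lt_of_le (Finset.mem_range.mp hj) hlt)
  have hsum : S a = (a : ℝ) + 1 - u a - u a * μ := by
    rw [hS]
    have h1 : ∑ k ∈ Finset.range (a + 1), U k = u a := by
      rw [Finset.sum_eq_single a]
      · exact (hUk a le_rfl).trans (if_pos rfl)
      · intro k hk hne
        rw [hUk k (Nat.lt_succ_iff.mp (Finset.mem_range.mp hk)), if_neg hne]
      · intro h; exact absurd (Finset.self_mem_range_succ a) h
    have h2 : ∑ k ∈ Finset.range (a + 1), u k * μ = u a * μ := by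
      rw [Finset.sum_eq_single a]
      · intro k hk hne
        rw [ha' k (lt_of_le_of_ne (Nat.lt_succ_iff.mp (Finset.mem_range.mp hk)) hne), zero_mul]
      · intro h; exact absurd (Finset.self_mem_range_succ a) h
    simp only [Finset.sum_sub_distrib, h1, h2, Finset.sum_const, Finset.card_range,
      nsmul_eq_mul, mul_one]
    push_cast
    ring
  rw [hsum]
  linarith
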